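/- Let ξ ∈ ℚ[[x]] be the unique formal power series with zero constant term satisfying x·ξ(x) − x³ − ξ(x)³ = 0, and let G(x) = x³ ∑_{i≥0} Q_{i,0} x^i ∈ ℚ[[x]], where Q_{i,0} is the number of knight walks ending at (i,0). Define the iterates ξ^{(0)}(x) = x and ξ^{(i+1)} = ξ ∘ ξ^{(i)}. Then the valuation of ξ^{(i)} is 2^i, the infinite sum ∑_{i≥0} (−1)^i (ξ^{(i)}(x) · ξ^{(i+1)}(x))² converges in ℚ[[x]], and G(x) = ∑_{i≥0} (−1)^i (ξ^{(i)}(x) · ξ^{(i+1)}(x))². -/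

import Mathlib

/-- `w : Fin (n+1) → ℤ × ℤ` is a knight walk of length `n`: it starts at `(1,1)`, takes its
steps in `{(-1,2), (2,-1)}` and all its vertices have nonnegative coordinates. -/
def IsKnightWalk (n : ℕ) (w : Fin (n + 1) → ℤ × ℤ) : Prop :=
  w 0 = (1, 1) ∧
  (∀ k : Fin n, w k.succ - w k.castSucc ∈ ({(-1, 2), (2, -1)} : Set (ℤ × ℤ))) ∧
  ∀ k, 0 ≤ (w k).1 ∧ 0 ≤ (w k).2

/-- `Q i j` is the number of knight walks (of any length) ending at `(i, j)`. -/
noncomputable def Q (i j : ℕ) : ℕ :=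
  Nat.card {p : Σ n : ℕ, Fin (n + 1) → ℤ × ℤ //
    IsKnightWalk p.1 p.2 ∧ p.2 (Fin.last p.1) = ((i : ℤ), (j : ℤ))}

/-- `G(x) = x³ ∑_{i ≥ 0} Q_{i,0} xⁱ`, the generating function of knight walks ending on
the `x`-axis. -/
noncomputable def G : PowerSeries ℚ :=
  PowerSeries.mk fun n => if 3 ≤ n then (Q (n - 3) 0 : ℚ) else 0

/-- Composition `F(f)` of formal power series; this is the usual composition whenever `f`
has zero constant term. -/
noncomputable def composePS (F f : PowerSeries ℚ) : PowerSeries ℚ :=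
  PowerSeries.mk fun N => PowerSeries.coeff N
    (∑ k ∈ Finset.range (N + 1), PowerSeries.C (PowerSeries.coeff k F) * f ^ k)

/-- The iterates `ξ⁽⁰⁾(x) = x`, `ξ⁽ⁱ⁺¹⁾ = ξ ∘ ξ⁽ⁱ⁾`. -/
noncomputable def iterXi (ξ : PowerSeries ℚ) : ℕ → PowerSeries ℚ
  | 0 => PowerSeries.X
  | i + 1 => composePS ξ (iterXi ξ i)


open PowerSeries Finset

namespace KW

lemma coeff_composePS (N : ℕ) (F f : PowerSeries ℚ) :
    coeff N (composePS F f) =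
      ∑ k ∈ range (N + 1), coeff k F * coeff N (f ^ k) := by
  simp [composePS, coeff_mk, map_sum, coeff_C_mul]

lemma coeff_pow_eq_zero {f : PowerSeries ℚ} (hf : constantCoeff f = 0)
    {N k : ℕ} (h : N < k) : coeff N (f ^ k) = 0 := by
  obtain ⟨g, rfl⟩ := X_dvd_iff.2 hf
  rw [mul_pow, coeff_X_pow_mul', if_neg (by omega)]

lemma coeff_composePS_of_le {f : PowerSeries ℚ} (hf : constantCoeff f = 0)
    {N M : ℕ} (hM : N + 1 ≤ M) (F : PowerSeries ℚ) :
    coeff N (composePS F f) =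
      ∑ k ∈ range M, coeff k F * coeff N (f ^ k) := by
  rw [coeff_composePS]
  exact Finset.sum_subset (Finset.range_subset_range.2 hM) (fun k _ hk => by
    rw [coeff_pow_eq_zero hf (by simp at hk ⊢; omega), mul_zero])

/-- coefficientwise agreement up to degree `N` -/
def cEq (N : ℕ) (a b : PowerSeries ℚ) : Prop := ∀ m ≤ N, coeff m a = coeff m b

lemma cEq.add {N a b c d} (h1 : cEq N a b) (h2 : cEq N c d) : cEq N (a + c) (b + d) :=
  fun m hm => by simp [h1 m hm, h2 m hm]

lemma cEq.mul {N a b c d} (h1 : cEq N a b) (h2 : cEq N c d) : cEq N (a * c) (b * d) := by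
  intro m hm
  rw [coeff_mul, coeff_mul]
  refine Finset.sum_congr rfl fun p hp => ?_
  rw [Finset.HasAntidiagonal.mem_antidiagonal] at hp
  rw [h1 p.1 (by omega), h2 p.2 (by omega)]

lemma cEq_composePS {f : PowerSeries ℚ} (hf : constantCoeff f = 0)
    (N : ℕ) (F : PowerSeries ℚ) :
    cEq N (composePS F f) (∑ k ∈ range (N + 1), C (coeff k F) * f ^ k) := by
  intro m hm
  rw [coeff_composePS_of_le hf (show m + 1 ≤ N + 1 by omega), map_sum]
  simp [coeff_C_mul]

lemma cEq_composePS_congr {f : PowerSeries ℚ} {N : ℕ} {F G : PowerSeries ℚ}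
    (h : cEq N F G) : cEq N (composePS F f) (composePS G f) := by
  intro m hm
  rw [coeff_composePS, coeff_composePS]
  exact Finset.sum_congr rfl fun k hk => by
    rw [h k (by simp at hk; omega)]

lemma composePS_add (F G f : PowerSeries ℚ) :
    composePS (F + G) f = composePS F f + composePS G f := by
  ext N
  simp [coeff_composePS, add_mul, Finset.sum_add_distrib]

lemma composePS_C (c : ℚ) (f : PowerSeries ℚ) : composePS (C c) f = C c := by
  ext N
  rw [coeff_composePS]
  rcases Nat.eq_zero_or_pos N with rfl | hN
  · simp
  · rw [Finset.sum_eq_single 0]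
    · simp [coeff_C]
    · intro k hk hk0
      simp [coeff_C, hk0]
    · simp

lemma composePS_one (f : PowerSeries ℚ) : composePS 1 f = 1 := by
  simpa using composePS_C 1 f

lemma composePS_X {f : PowerSeries ℚ} (hf : constantCoeff f = 0) :
    composePS X f = f := by
  ext N
  rw [coeff_composePS]
  rcases Nat.eq_zero_or_pos N with rfl | hN
  · simpa [coeff_X] using hf.symm
  · rw [Finset.sum_eq_single 1]
    · simp
    · intro k hk hk1
      simp [coeff_X, hk1]
    · intro h; simp at h; omega


lemma tri_box {N : ℕ} {g : ℕ → ℕ → ℚ} (h : ∀ a b, N < a + b → g a b = 0) :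
    ∑ k ∈ range (N + 1), ∑ p ∈ Finset.HasAntidiagonal.antidiagonal k, g p.1 p.2 =
      ∑ a ∈ range (N + 1), ∑ b ∈ range (N + 1), g a b := by
  rw [← Finset.sum_product']
  rw [← Finset.sum_biUnion (by
    intro x _ y _ hxy
    simp only [Function.onFun, Finset.disjoint_left]
    intro p hp hp'
    exact hxy (by rw [← Finset.HasAntidiagonal.mem_antidiagonal.1 hp, ← Finset.HasAntidiagonal.mem_antidiagonal.1 hp']))]
  rw [show (range (N+1) ×ˢ range (N+1) : Finset (ℕ × ℕ)) =
      ((range (N+1)).biUnion fun k => Finset.HasAntidiagonal.antidiagonal k) ∪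
      ((range (N+1) ×ˢ range (N+1)).filter fun p => N < p.1 + p.2) from ?_]
  · rw [Finset.sum_union ?disj]
    case disj =>
      simp only [Finset.disjoint_left, Finset.mem_biUnion, Finset.mem_filter]
      rintro p ⟨k, hk, hp⟩ ⟨-, hN⟩
      rw [Finset.HasAntidiagonal.mem_antidiagonal.1 hp] at hN
      simp at hk; omega
    rw [Finset.sum_filter]
    have hz : ∀ p ∈ range (N+1) ×ˢ range (N+1),
        (if N < p.1 + p.2 then g p.1 p.2 else 0) = 0 := by
      intro p _
      split
      · exact h _ _ ‹_›
      · rfl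
    rw [Finset.sum_congr rfl hz, Finset.sum_const_zero, add_zero]
  · ext p
    simp only [Finset.mem_union, Finset.mem_biUnion, Finset.mem_filter,
      Finset.HasAntidiagonal.mem_antidiagonal, Finset.mem_product, Finset.mem_range]
    constructor
    · rintro ⟨h1, h2⟩
      by_cases hN : N < p.1 + p.2
      · exact Or.inr ⟨⟨h1, h2⟩, hN⟩
      · exact Or.inl ⟨p.1 + p.2, by omega, rfl⟩
    · rintro (⟨k, hk, hp⟩ | ⟨⟨h1, h2⟩, -⟩) <;> omega

lemma composePS_mul {f : PowerSeries ℚ} (hf : constantCoeff f = 0)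
    (F G : PowerSeries ℚ) :
    composePS (F * G) f = composePS F f * composePS G f := by
  ext N
  rw [coeff_composePS, coeff_mul]
  have rhs : ∑ p ∈ Finset.HasAntidiagonal.antidiagonal N, coeff p.1 (composePS F f) * coeff p.2 (composePS G f)
      = ∑ a ∈ range (N+1), ∑ b ∈ range (N+1),
          coeff a F * coeff b G * coeff N (f ^ (a + b)) := by
    have step : ∀ p ∈ Finset.HasAntidiagonal.antidiagonal N,
        coeff p.1 (composePS F f) * coeff p.2 (composePS G f)
        = ∑ a ∈ range (N+1), ∑ b ∈ range (N+1),
            (coeff a F * coeff p.1 (f ^ a)) * (coeff b G * coeff p.2 (f ^ b)) := by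
      intro p hp
      rw [Finset.HasAntidiagonal.mem_antidiagonal] at hp
      rw [coeff_composePS_of_le hf (show p.1 + 1 ≤ N + 1 by omega),
        coeff_composePS_of_le hf (show p.2 + 1 ≤ N + 1 by omega), Finset.sum_mul_sum]
    rw [Finset.sum_congr rfl step, Finset.sum_comm]
    refine Finset.sum_congr rfl fun a _ => ?_
    rw [Finset.sum_comm]
    refine Finset.sum_congr rfl fun b _ => ?_
    rw [pow_add, coeff_mul, Finset.mul_sum]
    exact Finset.sum_congr rfl fun p _ => by ring
  rw [rhs]
  have lhs : ∑ k ∈ range (N + 1), coeff k (F * G) * coeff N (f ^ k)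
      = ∑ k ∈ range (N + 1), ∑ p ∈ Finset.HasAntidiagonal.antidiagonal k,
          coeff p.1 F * coeff p.2 G * coeff N (f ^ (p.1 + p.2)) := by
    refine Finset.sum_congr rfl fun k _ => ?_
    rw [coeff_mul, Finset.sum_mul]
    refine Finset.sum_congr rfl fun p hp => ?_
    rw [Finset.HasAntidiagonal.mem_antidiagonal.1 hp]
  rw [lhs,
    tri_box (g := fun a b => coeff a F * coeff b G * coeff N (f ^ (a + b)))
      (fun a b hab => by beta_reduce; rw [coeff_pow_eq_zero hf hab, mul_zero])]

lemma composePS_pow {f : PowerSeries ℚ} (hf : constantCoeff f = 0)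
    (F : PowerSeries ℚ) (n : ℕ) :
    composePS (F ^ n) f = composePS F f ^ n := by
  induction n with
  | zero => simpa using composePS_one f
  | succ n ih => rw [pow_succ, pow_succ, composePS_mul hf, ih]

lemma composePS_neg (F f : PowerSeries ℚ) : composePS (-F) f = - composePS F f := by
  ext N
  simp [coeff_composePS, Finset.sum_neg_distrib]

lemma composePS_sub (F G f : PowerSeries ℚ) :
    composePS (F - G) f = composePS F f - composePS G f := by
  rw [sub_eq_add_neg, composePS_add, composePS_neg, sub_eq_add_neg]

lemma constantCoeff_composePS {f : PowerSeries ℚ} (hf : constantCoeff f = 0)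
    (F : PowerSeries ℚ) :
    constantCoeff (composePS F f) = coeff 0 F := by
  rw [← coeff_zero_eq_constantCoeff, coeff_composePS]
  simp

lemma composePS_X_right (F : PowerSeries ℚ) : composePS F X = F := by
  ext N
  rw [coeff_composePS, Finset.sum_eq_single N]
  · simp [coeff_X_pow]
  · intro k hk hkN
    rw [coeff_X_pow, if_neg (fun h => hkN h.symm), mul_zero]
  · intro h; simp at h

lemma composePS_assoc {f g : PowerSeries ℚ} (hf : constantCoeff f = 0)
    (hg : constantCoeff g = 0) (F : PowerSeries ℚ) :
    composePS (composePS F g) f = composePS F (composePS g f) := by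
  have hgf : constantCoeff (composePS g f) = 0 := by
    rw [constantCoeff_composePS hf, coeff_zero_eq_constantCoeff, hg]
  ext N
  have h1 : cEq N (composePS (composePS F g) f)
      (composePS (∑ k ∈ range (N + 1), C (coeff k F) * g ^ k) f) :=
    cEq_composePS_congr (cEq_composePS hg N F)
  have h2 : composePS (∑ k ∈ range (N + 1), C (coeff k F) * g ^ k) f
      = ∑ k ∈ range (N + 1), C (coeff k F) * (composePS g f) ^ k := by
    induction (range (N+1)) using Finset.induction with
    | empty => simpa using composePS_C 0 f
    | insert x s hx ih =>
        rw [Finset.sum_insert hx, Finset.sum_insert hx, composePS_add,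
          composePS_mul hf, composePS_C, composePS_pow hf, ih]
  rw [h1 N le_rfl, h2]
  exact ((cEq_composePS hgf N F) N le_rfl).symm


variable {ξ : PowerSeries ℚ}

lemma coeff_X_pow_mul_zero {t N : ℕ} (g : PowerSeries ℚ) (h : N < t) :
    coeff N (X ^ t * g) = 0 := by
  rw [coeff_X_pow_mul', if_neg (by omega)]

lemma kernel_eq (hroot : X * ξ - X ^ 3 - ξ ^ 3 = 0) :
    X * ξ = X ^ 3 + ξ ^ 3 := by
  have := sub_eq_zero.1 (by linear_combination hroot : X * ξ - (X ^ 3 + ξ ^ 3) = 0)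
  exact this

lemma xi_shape (h0 : constantCoeff ξ = 0) (hroot : X * ξ - X ^ 3 - ξ ^ 3 = 0) :
    ∃ u, ξ = X ^ 2 * u ∧ constantCoeff u = 1 := by
  have hk := kernel_eq hroot
  obtain ⟨g, hg⟩ := X_dvd_iff.2 h0
  have hg0 : constantCoeff g = 0 := by
    have h2 : coeff 2 (X * ξ) = coeff 2 (X ^ 3 + ξ ^ 3) := by rw [hk]
    rw [coeff_succ_X_mul, map_add, coeff_X_pow, if_neg (by norm_num),
      coeff_pow_eq_zero h0 (by norm_num)] at h2
    rw [hg, coeff_succ_X_mul, coeff_zero_eq_constantCoeff] at h2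
    simpa using h2
  obtain ⟨u, hu⟩ := X_dvd_iff.2 hg0
  have hxi : ξ = X ^ 2 * u := by rw [hg, hu]; ring
  refine ⟨u, hxi, ?_⟩
  have h3 : coeff 3 (X * ξ) = coeff 3 (X ^ 3 + ξ ^ 3) := by rw [hk]
  have hXXu : X * ξ = X ^ 3 * u := by rw [hxi]; ring
  have hxicube : ξ ^ 3 = X ^ 6 * u ^ 3 := by rw [hxi]; ring
  rw [hXXu, show (3:ℕ) = 0 + 3 from rfl, coeff_X_pow_mul, map_add, coeff_X_pow,
    hxicube, coeff_X_pow_mul_zero _ (by norm_num)] at h3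
  simpa using h3

lemma order_X_pow_mul {m : ℕ} {v : PowerSeries ℚ} (hv : constantCoeff v ≠ 0) :
    (X ^ m * v).order = (m : ℕ∞) := by
  rw [order_eq_nat]
  constructor
  · have h := coeff_X_pow_mul v m 0
    rw [zero_add] at h
    rw [h]
    simpa using hv
  · intro i hi
    exact coeff_X_pow_mul_zero _ hi


lemma iter_shape (h0 : constantCoeff ξ = 0) (hroot : X * ξ - X ^ 3 - ξ ^ 3 = 0) :
    ∀ n, ∃ v, iterXi ξ n = X ^ (2 ^ n) * v ∧ constantCoeff v = 1 := by
  obtain ⟨u, hxi, hu⟩ := xi_shape h0 hroot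
  intro n
  induction n with
  | zero => exact ⟨1, by simp [iterXi], by simp⟩
  | succ n ih =>
      obtain ⟨v, hv, hv0⟩ := ih
      have hw0 : constantCoeff (iterXi ξ n) = 0 := by
        rw [← coeff_zero_eq_constantCoeff, hv]
        exact coeff_X_pow_mul_zero _ (by positivity)
      refine ⟨v ^ 2 * composePS u (iterXi ξ n), ?_, ?_⟩
      · show composePS ξ (iterXi ξ n) = _
        nth_rewrite 1 [hxi]
        rw [composePS_mul hw0, composePS_pow hw0, composePS_X hw0, hv]
        ring_nf
      · rw [map_mul, map_pow, hv0, constantCoeff_composePS hw0,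
          coeff_zero_eq_constantCoeff, hu]
        norm_num

lemma order_iter (h0 : constantCoeff ξ = 0) (hroot : X * ξ - X ^ 3 - ξ ^ 3 = 0) (n : ℕ) :
    (iterXi ξ n).order = (2 ^ n : ℕ) := by
  obtain ⟨v, hv, hv0⟩ := iter_shape h0 hroot n
  rw [hv]
  exact order_X_pow_mul (by rw [hv0]; norm_num)

lemma constantCoeff_iter (h0 : constantCoeff ξ = 0) (hroot : X * ξ - X ^ 3 - ξ ^ 3 = 0)
    (n : ℕ) : constantCoeff (iterXi ξ n) = 0 := by
  obtain ⟨v, hv, -⟩ := iter_shape h0 hroot n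
  rw [← coeff_zero_eq_constantCoeff, hv]
  exact coeff_X_pow_mul_zero _ (by positivity)

lemma coeff_Phi_zero (h0 : constantCoeff ξ = 0) (hroot : X * ξ - X ^ 3 - ξ ^ 3 = 0)
    {N i : ℕ} (h : N < 2 ^ i) :
    coeff N ((iterXi ξ i * iterXi ξ (i + 1)) ^ 2) = 0 := by
  obtain ⟨v, hv, -⟩ := iter_shape h0 hroot i
  obtain ⟨v', hv', -⟩ := iter_shape h0 hroot (i + 1)
  rw [hv, hv', show (X ^ 2 ^ i * v * (X ^ 2 ^ (i+1) * v')) ^ 2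
      = X ^ (2 * (2 ^ i + 2 ^ (i+1))) * (v * v') ^ 2 by rw [pow_add, pow_mul]; ring]
  exact coeff_X_pow_mul_zero _ (by have : 0 < 2 ^ i := by positivity
                                   have h2 : 2 ^ (i+1) = 2 ^ i * 2 := by ring
                                   omega)


/-! ### Lists encoding of knight walks (reversed step lists) -/

def stepOf : Bool → ℤ × ℤ := fun b => if b then (-1, 2) else (2, -1)

def pos : List Bool → ℤ × ℤ
  | [] => (1, 1)
  | b :: l => pos l + stepOf b

def Good : List Bool → Prop
  | [] => True
  | b :: l => Good l ∧ 0 ≤ (pos (b :: l)).1 ∧ 0 ≤ (pos (b :: l)).2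

def GZ (a b : ℤ) : Type := {l : List Bool // Good l ∧ pos l = (a, b)}

noncomputable def QZ (a b : ℤ) : ℕ := Nat.card (GZ a b)

lemma good_nonneg {l : List Bool} (h : Good l) : 0 ≤ (pos l).1 ∧ 0 ≤ (pos l).2 := by
  cases l with
  | nil => simp [pos]
  | cons b l => exact h.2

lemma pos_sum (l : List Bool) : (pos l).1 + (pos l).2 = 2 + l.length := by
  induction l with
  | nil => simp [pos]
  | cons b l ih =>
      simp only [pos, Prod.fst_add, Prod.snd_add, List.length_cons]
      cases b <;> simp [stepOf] <;> omega

lemma GZ_length {a b : ℤ} (p : GZ a b) : (p.1.length : ℤ) = a + b - 2 := by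
  have := pos_sum p.1
  rw [p.2.2] at this
  simp at this
  omega

instance finite_GZ (a b : ℤ) : Finite (GZ a b) := by
  haveI : Finite {l : List Bool // l.length = (a + b - 2).toNat} :=
    Finite.of_fintype (List.Vector Bool (a + b - 2).toNat)
  refine Finite.of_injective
    (fun p : GZ a b =>
      (⟨p.1, by have := GZ_length p; omega⟩ : {l : List Bool // l.length = (a + b - 2).toNat}))
    ?_
  intro p q h
  apply Subtype.ext
  have h' := congrArg Subtype.val h
  simpa using h'

lemma QZ_zero {a b : ℤ} (h : a < 0 ∨ b < 0) : QZ a b = 0 := by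
  have : IsEmpty (GZ a b) := ⟨fun p => by
    have h2 := good_nonneg p.2.1
    rw [p.2.2] at h2
    simp at h2
    omega⟩
  exact Nat.card_of_isEmpty

lemma QZ_low {a b : ℤ} (h : a + b < 2) : QZ a b = 0 := by
  have : IsEmpty (GZ a b) := ⟨fun p => by have := GZ_length p; omega⟩
  exact Nat.card_of_isEmpty

lemma pos_map_not (l : List Bool) : pos (l.map not) = ((pos l).2, (pos l).1) := by
  induction l with
  | nil => simp [pos]
  | cons b l ih =>
      simp only [List.map_cons, pos, ih]
      cases b <;> simp [stepOf, Prod.ext_iff]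

lemma good_map_not {l : List Bool} (h : Good l) : Good (l.map not) := by
  induction l with
  | nil => trivial
  | cons b l ih =>
      exact ⟨ih h.1, by
        show 0 ≤ (pos (List.map not (b :: l))).1 ∧ 0 ≤ (pos (List.map not (b :: l))).2
        rw [List.map_cons, show ((not b) :: List.map not l) = List.map not (b :: l) from rfl,
          pos_map_not]
        exact ⟨h.2.2, h.2.1⟩⟩

lemma QZ_symm (a b : ℤ) : QZ a b = QZ b a := by
  refine Nat.card_congr ⟨fun p => ⟨p.1.map not, good_map_not p.2.1, by
      rw [pos_map_not, p.2.2]⟩,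
    fun p => ⟨p.1.map not, good_map_not p.2.1, by rw [pos_map_not, p.2.2]⟩, ?_, ?_⟩
  · intro p
    exact Subtype.ext (by show (p.1.map not).map not = p.1; simp [Function.comp_def])
  · intro p
    exact Subtype.ext (by show (p.1.map not).map not = p.1; simp [Function.comp_def])


lemma pos_cons (b : Bool) (l : List Bool) : pos (b :: l) = pos l + stepOf b := rfl

noncomputable def decompGZ {a b : ℤ} (ha : 0 ≤ a) (hb : 0 ≤ b) :
    GZ a b ≃ (PLift (a = 1 ∧ b = 1)) ⊕ (GZ (a + 1) (b - 2)) ⊕ (GZ (a - 2) (b + 1)) where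
  toFun := fun ⟨l, hl⟩ => match l, hl with
    | [], h => Sum.inl ⟨by
        have : ((1 : ℤ), (1 : ℤ)) = (a, b) := h.2
        exact ⟨(congrArg Prod.fst this).symm, (congrArg Prod.snd this).symm⟩⟩
    | true :: l, h => Sum.inr (Sum.inl ⟨l, h.1.1, by
        have h2 := h.2
        rw [pos_cons] at h2
        have h3 : pos l = (a, b) - stepOf true := by rw [← h2]; ring
        rw [h3]
        simp [stepOf, Prod.ext_iff]⟩)
    | false :: l, h => Sum.inr (Sum.inr ⟨l, h.1.1, by
        have h2 := h.2
        rw [pos_cons] at h2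
        have h3 : pos l = (a, b) - stepOf false := by rw [← h2]; ring
        rw [h3]
        simp [stepOf, Prod.ext_iff]⟩)
  invFun := fun s => match s with
    | Sum.inl ⟨h⟩ => ⟨[], trivial, by rw [h.1, h.2]; rfl⟩
    | Sum.inr (Sum.inl ⟨l, hg, hp⟩) => ⟨true :: l, by
        have hpos : pos (true :: l) = (a, b) := by
          rw [pos_cons, hp]; simp [stepOf, Prod.ext_iff]
        exact ⟨⟨hg, by rw [hpos]; exact ⟨ha, hb⟩⟩, hpos⟩⟩
    | Sum.inr (Sum.inr ⟨l, hg, hp⟩) => ⟨false :: l, by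
        have hpos : pos (false :: l) = (a, b) := by
          rw [pos_cons, hp]; simp [stepOf, Prod.ext_iff]
        exact ⟨⟨hg, by rw [hpos]; exact ⟨ha, hb⟩⟩, hpos⟩⟩
  left_inv := fun ⟨l, hl⟩ => by
    match l, hl with
    | [], h => rfl
    | true :: l, h => rfl
    | false :: l, h => rfl
  right_inv := fun s => by
    rcases s with ⟨h⟩ | ⟨l, hg, hp⟩ | ⟨l, hg, hp⟩ <;> rfl

lemma QZ_rec {a b : ℤ} (ha : 0 ≤ a) (hb : 0 ≤ b) :
    QZ a b = (if a = 1 ∧ b = 1 then 1 else 0) + QZ (a + 1) (b - 2) + QZ (a - 2) (b + 1) := by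
  have hcard : Nat.card (PLift (a = 1 ∧ b = 1)) = if a = 1 ∧ b = 1 then 1 else 0 := by
    by_cases h : a = 1 ∧ b = 1
    · rw [if_pos h]
      haveI : Unique (PLift (a = 1 ∧ b = 1)) :=
        ⟨⟨⟨h⟩⟩, fun x => rfl⟩
      exact Nat.card_unique
    · rw [if_neg h]
      haveI : IsEmpty (PLift (a = 1 ∧ b = 1)) := ⟨fun x => h x.down⟩
      exact Nat.card_of_isEmpty
  rw [show QZ a b = Nat.card ((PLift (a = 1 ∧ b = 1)) ⊕ (GZ (a + 1) (b - 2)) ⊕ (GZ (a - 2) (b + 1)))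
      from Nat.card_congr (decompGZ ha hb)]
  rw [Nat.card_sum, Nat.card_sum, hcard]
  show _ = _ + QZ (a + 1) (b - 2) + QZ (a - 2) (b + 1)
  show (if a = 1 ∧ b = 1 then 1 else 0) + (QZ (a + 1) (b - 2) + QZ (a - 2) (b + 1)) = _
  omega


/-! ### From walks to lists -/

lemma good_drop {l : List Bool} (t : ℕ) (h : Good l) : Good (l.drop t) := by
  induction l generalizing t with
  | nil => simpa using h
  | cons b l ih =>
      cases t with
      | zero => exact h
      | succ t => exact ih t h.1

def walkOf (l : List Bool) : Fin (l.length + 1) → ℤ × ℤ :=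
  fun k => pos (l.drop (l.length - k.val))

lemma stepOf_mem (b : Bool) : stepOf b ∈ ({(-1, 2), (2, -1)} : Set (ℤ × ℤ)) := by
  cases b <;> simp [stepOf]

lemma isKnightWalk_walkOf {l : List Bool} (h : Good l) : IsKnightWalk l.length (walkOf l) := by
  refine ⟨?_, ?_, ?_⟩
  · show pos (l.drop (l.length - 0)) = (1, 1)
    rw [Nat.sub_zero, List.drop_length]
    rfl
  · intro k
    have hk : k.val < l.length := k.isLt
    have hn : l.length - (k.val + 1) < l.length := by omega
    have hdrop := List.drop_eq_getElem_cons hn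
    show pos (l.drop (l.length - (k.val + 1))) - pos (l.drop (l.length - k.val)) ∈ _
    rw [show l.length - k.val = (l.length - (k.val + 1)) + 1 by omega, hdrop, pos_cons,
      add_sub_cancel_left]
    exact stepOf_mem _
  · intro k
    exact good_nonneg (good_drop _ h)

lemma stepOf_inj : Function.Injective stepOf := by
  intro a b h
  cases a <;> cases b <;> simp_all [stepOf]

lemma walkOf_step {l : List Bool} {m : ℕ} (hm : m < l.length) :
    stepOf l[m] = pos (l.drop m) - pos (l.drop (m + 1)) := by
  rw [List.drop_eq_getElem_cons (by omega), pos_cons]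
  ring

/-- every knight walk comes from a good list -/
lemma exists_list : ∀ n (w : Fin (n + 1) → ℤ × ℤ), IsKnightWalk n w →
    ∃ l : List Bool, Good l ∧ l.length = n ∧
      ∀ k : Fin (n + 1), pos (l.drop (n - k.val)) = w k := by
  intro n
  induction n with
  | zero =>
      intro w hw
      refine ⟨[], trivial, rfl, fun k => ?_⟩
      have : k = 0 := by
        apply Fin.ext
        omega
      rw [this, hw.1]
      rfl
  | succ n ih =>
      intro w hw
      have hinit : IsKnightWalk n (Fin.init w) := by
        refine ⟨?_, ?_, ?_⟩
        · show w (Fin.castSucc 0) = (1, 1)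
          rw [show Fin.castSucc 0 = (0 : Fin (n+2)) from rfl, hw.1]
        · intro k
          have := hw.2.1 k.castSucc
          show w (Fin.castSucc k.succ) - w (Fin.castSucc k.castSucc) ∈ _
          rwa [Fin.succ_castSucc] at this
        · intro k
          exact hw.2.2 _
      obtain ⟨l', hg, hlen, hvert⟩ := ih (Fin.init w) hinit
      have hstep := hw.2.1 (Fin.last n)
      rw [show (Fin.last n).succ = Fin.last (n+1) from rfl] at hstep
      have : ∃ b : Bool, stepOf b = w (Fin.last (n+1)) - w ((Fin.last n).castSucc) := by
        rcases hstep with h | h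
        · exact ⟨true, by rw [stepOf]; simpa using h.symm⟩
        · exact ⟨false, by rw [stepOf]; simp at h ⊢; rw [h]⟩
      obtain ⟨b, hb⟩ := this
      have hposl' : pos l' = w ((Fin.last n).castSucc) := by
        have := hvert (Fin.last n)
        rw [show n - (Fin.last n).val = 0 by simp, List.drop_zero] at this
        rw [this]
        rfl
      have hposbl : pos (b :: l') = w (Fin.last (n+1)) := by
        rw [pos_cons, hb, hposl']
        ring
      refine ⟨b :: l', ⟨hg, by rw [hposbl]; exact hw.2.2 _⟩, by simp [hlen], fun k => ?_⟩
      rcases Nat.lt_or_ge k.val (n+1) with hk | hk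
      · have hd : (n + 1) - k.val = (n - k.val) + 1 := by omega
        rw [hd, List.drop_succ_cons]
        have := hvert ⟨k.val, by omega⟩
        rw [this]
        show w (Fin.castSucc ⟨k.val, by omega⟩) = w k
        have hc : Fin.castSucc ⟨k.val, by omega⟩ = k := Fin.ext (by simp)
        rw [hc]
      · have hk1 : k = Fin.last (n+1) := by
          apply Fin.ext
          have := k.isLt
          simp; omega
        rw [hk1]
        simpa using hposbl

noncomputable def toWalk {i j : ℕ} (p : GZ (i : ℤ) (j : ℤ)) :
    {p : Σ n : ℕ, Fin (n + 1) → ℤ × ℤ //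
      IsKnightWalk p.1 p.2 ∧ p.2 (Fin.last p.1) = ((i : ℤ), (j : ℤ))} :=
  ⟨⟨p.1.length, walkOf p.1⟩, isKnightWalk_walkOf p.2.1, by
    show pos (p.1.drop (p.1.length - p.1.length)) = _
    rw [Nat.sub_self, List.drop_zero, p.2.2]⟩

/-- evaluation that forgets the dependent typing -/
def evalW (x : Σ n : ℕ, Fin (n + 1) → ℤ × ℤ) (m : ℕ) : ℤ × ℤ :=
  if hm : m < x.1 + 1 then x.2 ⟨m, hm⟩ else 0

lemma toWalk_bijective (i j : ℕ) : Function.Bijective (toWalk (i := i) (j := j)) := by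
  constructor
  · intro p q h
    have hval := congrArg Subtype.val h
    have hn : p.1.length = q.1.length := congrArg Sigma.fst hval
    have hpt : ∀ m, evalW (toWalk p).1 m = evalW (toWalk q).1 m :=
      fun m => congrArg (fun x => evalW x.1 m) h
    have hposd : ∀ t, t ≤ p.1.length → pos (p.1.drop t) = pos (q.1.drop t) := by
      intro t ht
      have := hpt (p.1.length - t)
      rw [evalW, evalW, dif_pos (by show _ < p.1.length + 1; omega),
        dif_pos (by show _ < q.1.length + 1; omega)] at this
      show pos (p.1.drop t) = pos (q.1.drop t)
      have e1 : p.1.length - (p.1.length - t) = t := by omega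
      have e2 : q.1.length - (p.1.length - t) = t := by omega
      calc pos (p.1.drop t) = pos (p.1.drop (p.1.length - (p.1.length - t))) := by rw [e1]
        _ = pos (q.1.drop (q.1.length - (p.1.length - t))) := this
        _ = pos (q.1.drop t) := by rw [e2]
    apply Subtype.ext
    apply List.ext_getElem hn
    intro m hm1 hm2
    apply stepOf_inj
    rw [walkOf_step hm1, walkOf_step hm2, hposd m (by omega), hposd (m+1) (by omega)]
  · rintro ⟨⟨n, w⟩, hw, hend⟩
    obtain ⟨l, hg, hlen, hvert⟩ := exists_list n w hw
    subst hlen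
    refine ⟨⟨l, hg, by
      have := hvert (Fin.last l.length)
      rw [show l.length - (Fin.last l.length).val = 0 by simp, List.drop_zero] at this
      rw [this]
      exact hend⟩, ?_⟩
    apply Subtype.ext
    show (⟨l.length, walkOf l⟩ : Σ n : ℕ, Fin (n + 1) → ℤ × ℤ) = ⟨l.length, w⟩
    congr 1
    funext k
    exact hvert k
lemma Q_eq_QZ (i j : ℕ) : Q i j = QZ (i : ℤ) (j : ℤ) :=
  (Nat.card_eq_of_bijective _ (toWalk_bijective i j)).symm


/-! ### The central identity -/

noncomputable def Hx : PowerSeries ℚ := PowerSeries.mk fun i => (QZ (i : ℤ) 0 : ℚ)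

lemma sum_range_strip2 (h : ℕ → ℚ) (n : ℕ) (h0 : h 0 = 0) (h1 : h 1 = 0) :
    ∑ j ∈ range (n + 2), h j = ∑ j ∈ range n, h (j + 2) := by
  rw [Finset.sum_range_succ' h (n + 1), Finset.sum_range_succ' (fun j => h (j + 1)) n, h0, h1]
  simp

lemma central (h0 : constantCoeff ξ = 0) (hroot : X * ξ - X ^ 3 - ξ ^ 3 = 0) :
    X ^ 3 * Hx + ξ ^ 3 * composePS Hx ξ = (X * ξ) ^ 2 := by
  obtain ⟨u, hup, -⟩ := xi_shape h0 hroot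
  ext N
  set M := N + 3 with hM
  -- the coefficient extractor
  set r : ℕ → ℕ → ℚ := fun i j => coeff N (X ^ i * ξ ^ j) with hr
  have rz : ∀ i j : ℕ, N < i + 2 * j → r i j = 0 := by
    intro i j hij
    have : X ^ i * ξ ^ j = X ^ (i + 2 * j) * u ^ j := by
      rw [hup]; rw [mul_pow, ← pow_mul]; ring
    rw [hr]
    simp only []
    rw [this]
    exact coeff_X_pow_mul_zero _ hij
  have rker : ∀ i j : ℕ, r (i + 1) (j + 1) = r (i + 3) j + r i (j + 3) := by
    intro i j
    have h1 : X ^ (i+1) * ξ ^ (j+1) = (X * ξ) * (X ^ i * ξ ^ j) := by ring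
    have h2 : (X * ξ) * (X ^ i * ξ ^ j) = X ^ (i+3) * ξ ^ j + X ^ i * ξ ^ (j+3) := by
      rw [kernel_eq hroot]; ring
    rw [hr]
    simp only []
    rw [h1, h2, map_add]
  set q : ℕ → ℕ → ℚ := fun i j => (QZ (i : ℤ) (j : ℤ) : ℚ) with hq
  have qrec : ∀ i j : ℕ, q i j = (if i = 1 ∧ j = 1 then (1:ℚ) else 0)
      + (QZ ((i : ℤ) + 1) ((j : ℤ) - 2) : ℚ) + (QZ ((i : ℤ) - 2) ((j : ℤ) + 1) : ℚ) := by
    intro i j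
    rw [hq]
    simp only []
    rw [QZ_rec (by positivity) (by positivity)]
    push_cast
    congr 1
    congr 1
    by_cases h : i = 1 ∧ j = 1
    · rw [if_pos h, if_pos (by constructor <;> [exact_mod_cast h.1; exact_mod_cast h.2])]
    · rw [if_neg h, if_neg (fun hc => h ⟨by exact_mod_cast hc.1, by exact_mod_cast hc.2⟩)]
  -- the master sum
  have chainA : ∑ i ∈ range M, ∑ j ∈ range M, q i j * r (i+1) (j+1)
      = (∑ i ∈ range M, ∑ j ∈ range M, q i j * r (i+3) j)
        + ∑ i ∈ range M, ∑ j ∈ range M, q i j * r i (j+3) := by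
    rw [← Finset.sum_add_distrib]
    refine Finset.sum_congr rfl fun i _ => ?_
    rw [← Finset.sum_add_distrib]
    refine Finset.sum_congr rfl fun j _ => ?_
    rw [rker, mul_add]
  have chainB : ∑ i ∈ range M, ∑ j ∈ range M, q i j * r (i+1) (j+1)
      = r 2 2
        + (∑ i ∈ range M, ∑ j ∈ range M, (QZ ((i : ℤ) + 1) ((j : ℤ) - 2) : ℚ) * r (i+1) (j+1))
        + ∑ i ∈ range M, ∑ j ∈ range M, (QZ ((i : ℤ) - 2) ((j : ℤ) + 1) : ℚ) * r (i+1) (j+1) := by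
    have expand : ∀ i ∈ range M, ∀ j ∈ range M, q i j * r (i+1) (j+1)
        = (if i = 1 ∧ j = 1 then (1:ℚ) else 0) * r (i+1) (j+1)
          + (QZ ((i : ℤ) + 1) ((j : ℤ) - 2) : ℚ) * r (i+1) (j+1)
          + (QZ ((i : ℤ) - 2) ((j : ℤ) + 1) : ℚ) * r (i+1) (j+1) := by
      intro i _ j _
      rw [qrec i j]
      ring
    have step1 : ∑ i ∈ range M, ∑ j ∈ range M, q i j * r (i+1) (j+1)
        = (∑ i ∈ range M, ∑ j ∈ range M, (if i = 1 ∧ j = 1 then (1:ℚ) else 0) * r (i+1) (j+1))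
          + (∑ i ∈ range M, ∑ j ∈ range M, (QZ ((i : ℤ) + 1) ((j : ℤ) - 2) : ℚ) * r (i+1) (j+1))
          + ∑ i ∈ range M, ∑ j ∈ range M, (QZ ((i : ℤ) - 2) ((j : ℤ) + 1) : ℚ) * r (i+1) (j+1) := by
      rw [← Finset.sum_add_distrib, ← Finset.sum_add_distrib]
      refine Finset.sum_congr rfl fun i hi => ?_
      rw [← Finset.sum_add_distrib, ← Finset.sum_add_distrib]
      exact Finset.sum_congr rfl fun j hj => expand i hi j hj
    rw [step1]
    congr 2
    rw [Finset.sum_eq_single 1]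
    · rw [Finset.sum_eq_single 1]
      · norm_num
      · intro j _ hj
        rw [if_neg (fun hc => hj hc.2), zero_mul]
      · intro h
        exact absurd (by simp [hM] : (1:ℕ) ∈ range M) h
    · intro i _ hi
      apply Finset.sum_eq_zero
      intro j _
      rw [if_neg (fun hc => hi hc.1), zero_mul]
    · intro h
      exact absurd (by simp [hM] : (1:ℕ) ∈ range M) h
  -- chain C
  have chainC : (∑ i ∈ range M, ∑ j ∈ range M, (QZ ((i : ℤ) + 1) ((j : ℤ) - 2) : ℚ) * r (i+1) (j+1))
      + (∑ j ∈ range M, q 0 j * r 0 (j+3))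
      = ∑ i ∈ range M, ∑ j ∈ range M, q i j * r i (j+3) := by
    have inner : ∀ i : ℕ, ∑ j ∈ range M, (QZ ((i : ℤ) + 1) ((j : ℤ) - 2) : ℚ) * r (i+1) (j+1)
        = ∑ j ∈ range M, q (i+1) j * r (i+1) (j+3) := by
      intro i
      rw [show M = (N+1) + 2 by omega,
        sum_range_strip2 _ (N+1) (by norm_num [QZ_zero]) (by norm_num [QZ_zero])]
      have e1 : ∀ j : ℕ, (QZ ((i : ℤ) + 1) (((j+2 : ℕ) : ℤ) - 2) : ℚ) * r (i+1) ((j+2)+1)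
          = q (i+1) j * r (i+1) (j+3) := by
        intro j
        have h1 : ((j+2 : ℕ) : ℤ) - 2 = (j : ℤ) := by push_cast; ring
        have h2 : ((i : ℤ) + 1) = ((i+1 : ℕ) : ℤ) := by push_cast; ring
        rw [h1, h2]
      rw [Finset.sum_congr rfl fun j _ => e1 j]
      refine Finset.sum_subset (Finset.range_subset_range.2 (by omega)) fun j _ hj => ?_
      rw [rz _ _ (by simp at hj; omega), mul_zero]
    rw [Finset.sum_congr rfl fun i _ => inner i]
    rw [Finset.sum_range_succ' (fun i => ∑ j ∈ range M, q i j * r i (j+3)) (N+2)]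
    have outer_last : ∑ j ∈ range M, q ((N+2)+1) j * r ((N+2)+1) (j+3) = 0 :=
      Finset.sum_eq_zero fun j _ => by rw [rz _ _ (by omega), mul_zero]
    rw [show M = (N+2)+1 by omega, Finset.sum_range_succ
      (fun i => ∑ j ∈ range ((N+2)+1), q (i+1) j * r (i+1) (j+3)) (N+2)]
    rw [show ((N+2):ℕ)+1 = M by omega, outer_last, add_zero]
  -- chain D
  have chainD : (∑ i ∈ range M, ∑ j ∈ range M, (QZ ((i : ℤ) - 2) ((j : ℤ) + 1) : ℚ) * r (i+1) (j+1))
      + (∑ i ∈ range M, q i 0 * r (i+3) 0)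
      = ∑ i ∈ range M, ∑ j ∈ range M, q i j * r (i+3) j := by
    rw [Finset.sum_comm]
    have inner : ∀ j : ℕ, ∑ i ∈ range M, (QZ ((i : ℤ) - 2) ((j : ℤ) + 1) : ℚ) * r (i+1) (j+1)
        = ∑ i ∈ range M, q i (j+1) * r (i+3) (j+1) := by
      intro j
      rw [show M = (N+1) + 2 by omega,
        sum_range_strip2 _ (N+1) (by norm_num [QZ_zero]) (by norm_num [QZ_zero])]
      have e1 : ∀ i : ℕ, (QZ (((i+2 : ℕ) : ℤ) - 2) ((j : ℤ) + 1) : ℚ) * r ((i+2)+1) (j+1)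
          = q i (j+1) * r (i+3) (j+1) := by
        intro i
        have h1 : ((i+2 : ℕ) : ℤ) - 2 = (i : ℤ) := by push_cast; ring
        have h2 : ((j : ℤ) + 1) = ((j+1 : ℕ) : ℤ) := by push_cast; ring
        rw [h1, h2]
      rw [Finset.sum_congr rfl fun i _ => e1 i]
      refine Finset.sum_subset (Finset.range_subset_range.2 (by omega)) fun i _ hi => ?_
      rw [rz _ _ (by simp at hi; omega), mul_zero]
    rw [Finset.sum_congr rfl fun j _ => inner j]
    have rhs : ∀ i ∈ range M, ∑ j ∈ range M, q i j * r (i+3) j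
        = (∑ j ∈ range (N+2), q i (j+1) * r (i+3) (j+1)) + q i 0 * r (i+3) 0 := by
      intro i _
      rw [show M = (N+2)+1 by omega, Finset.sum_range_succ' (fun j => q i j * r (i+3) j) (N+2)]
    rw [Finset.sum_congr rfl rhs, Finset.sum_add_distrib]
    congr 1
    rw [Finset.sum_comm]
    refine Finset.sum_congr rfl fun j _ => ?_
    refine (Finset.sum_subset (Finset.range_subset_range.2 (by omega)) fun i _ hi => ?_).symm
    rw [rz _ _ (by simp at hi; omega), mul_zero]
  -- combine
  have key : (∑ i ∈ range M, q i 0 * r (i+3) 0) + (∑ j ∈ range M, q 0 j * r 0 (j+3)) = r 2 2 := by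
    have hA := chainA
    have hB := chainB
    linarith [hA, hB, chainC, chainD]
  -- identify the boundary sums
  have TxEq : (∑ i ∈ range M, q i 0 * r (i+3) 0) = coeff N (X ^ 3 * Hx) := by
    have rval : ∀ i : ℕ, r (i+3) 0 = if N = i + 3 then (1:ℚ) else 0 := by
      intro i
      rw [hr]
      simp only []
      rw [pow_zero, mul_one, coeff_X_pow]
    rw [coeff_X_pow_mul']
    by_cases h3 : 3 ≤ N
    · rw [if_pos h3]
      rw [Finset.sum_eq_single (N-3)]
      · rw [rval, if_pos (by omega), mul_one]
        show (QZ ((N-3 : ℕ) : ℤ) ((0:ℕ) : ℤ) : ℚ) = _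
        simp [Hx, coeff_mk]
      · intro i _ hi
        rw [rval, if_neg (by omega), mul_zero]
      · intro h
        exact absurd (by simp [hM]; omega : N - 3 ∈ range M) h
    · rw [if_neg h3]
      refine Finset.sum_eq_zero fun i _ => ?_
      rw [rval, if_neg (by omega), mul_zero]
  have TxiEq : (∑ j ∈ range M, q 0 j * r 0 (j+3)) = coeff N (ξ ^ 3 * composePS Hx ξ) := by
    have step1 : coeff N (ξ ^ 3 * composePS Hx ξ)
        = coeff N (ξ ^ 3 * ∑ k ∈ range (N + 1), C (coeff k Hx) * ξ ^ k) :=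
      cEq.mul (fun m _ => rfl) (cEq_composePS h0 N Hx) N le_rfl
    have step2 : ξ ^ 3 * ∑ k ∈ range (N + 1), C (coeff k Hx) * ξ ^ k
        = ∑ k ∈ range (N + 1), C (coeff k Hx) * ξ ^ (k + 3) := by
      rw [Finset.mul_sum]
      exact Finset.sum_congr rfl fun k _ => by ring
    rw [step1, step2, map_sum]
    have step3 : ∀ k ∈ range (N+1), coeff N (C (coeff k Hx) * ξ ^ (k+3))
        = q 0 k * r 0 (k+3) := by
      intro k _
      rw [coeff_C_mul]
      simp only [Hx, coeff_mk, hq, hr, pow_zero, one_mul]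
      rw [QZ_symm]
      norm_num
    rw [Finset.sum_congr rfl step3]
    refine (Finset.sum_subset (Finset.range_subset_range.2 (by omega)) fun j _ hj => ?_).symm
    rw [rz _ _ (by simp at hj; omega), mul_zero]
  rw [map_add, ← TxEq, ← TxiEq, key, hr]
  simp only []
  rw [show (X * ξ)^2 = X^2 * ξ^2 by ring]


lemma G_eq : G = X ^ 3 * Hx := by
  ext n
  rw [coeff_X_pow_mul']
  simp only [G, Hx, coeff_mk]
  by_cases h : 3 ≤ n
  · rw [if_pos h, if_pos h, Q_eq_QZ]
    norm_num
  · rw [if_neg h, if_neg h]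

lemma coeff_zero_G : coeff 0 G = 0 := by
  simp [G, coeff_mk]

lemma funcEq (h0 : constantCoeff ξ = 0) (hroot : X * ξ - X ^ 3 - ξ ^ 3 = 0) :
    G + composePS G ξ = (X * ξ) ^ 2 := by
  rw [G_eq, composePS_mul h0, composePS_pow h0, composePS_X h0, ← central h0 hroot]

lemma neg_one_pow_C (i : ℕ) : ((-1 : PowerSeries ℚ) ^ i) = C ((-1 : ℚ) ^ i) := by
  rw [map_pow, map_neg, map_one]

lemma expand (h0 : constantCoeff ξ = 0) (hroot : X * ξ - X ^ 3 - ξ ^ 3 = 0) :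
    ∀ n, G = (∑ i ∈ range n, (-1 : PowerSeries ℚ) ^ i * (iterXi ξ i * iterXi ξ (i+1)) ^ 2)
      + (-1 : PowerSeries ℚ) ^ n * composePS G (iterXi ξ n) := by
  intro n
  induction n with
  | zero => simp [composePS_X_right, iterXi]
  | succ n ih =>
      have hw : constantCoeff (iterXi ξ n) = 0 := constantCoeff_iter h0 hroot n
      have step : composePS G (iterXi ξ n) + composePS G (iterXi ξ (n+1))
          = (iterXi ξ n * iterXi ξ (n+1)) ^ 2 := by
        have happ := congrArg (fun F => composePS F (iterXi ξ n)) (funcEq h0 hroot)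
        beta_reduce at happ
        rw [composePS_add, composePS_assoc hw h0, composePS_pow hw, composePS_mul hw,
          composePS_X hw] at happ
        exact happ
      conv_lhs => rw [ih]
      rw [Finset.sum_range_succ]
      linear_combination ((-1 : PowerSeries ℚ) ^ n) * step

lemma tail_zero (h0 : constantCoeff ξ = 0) (hroot : X * ξ - X ^ 3 - ξ ^ 3 = 0)
    {N n : ℕ} (h : N < 2 ^ n) : coeff N (composePS G (iterXi ξ n)) = 0 := by
  obtain ⟨v, hv, -⟩ := iter_shape h0 hroot n
  rw [coeff_composePS]
  refine Finset.sum_eq_zero fun k hk => ?_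
  rcases Nat.eq_zero_or_pos k with rfl | hkpos
  · rw [coeff_zero_G, zero_mul]
  · rw [hv, mul_pow, ← pow_mul]
    rw [coeff_X_pow_mul_zero _ (by
      calc N < 2 ^ n := h
        _ ≤ 2 ^ n * k := Nat.le_mul_of_pos_right _ hkpos), mul_zero]

end KW

open KW in
/-- If `ξ` is the formal power series with zero constant term satisfying
`xξ − x³ − ξ³ = 0`, then its `i`-th compositional iterate has valuation `2ⁱ`, the sum
`∑_i (−1)ⁱ (ξ⁽ⁱ⁾ ξ⁽ⁱ⁺¹⁾)²` converges coefficientwise in `ℚ[[x]]`, and equals `G`. -/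
theorem knight_G_iterated_sum (ξ : PowerSeries ℚ)
    (h0 : PowerSeries.constantCoeff ξ = 0)
    (hroot : PowerSeries.X * ξ - PowerSeries.X ^ 3 - ξ ^ 3 = 0) :
    (∀ i : ℕ, (iterXi ξ i).order = (2 ^ i : ℕ)) ∧
    (∀ N : ℕ, {i : ℕ |
      PowerSeries.coeff N ((iterXi ξ i * iterXi ξ (i + 1)) ^ 2) ≠ 0}.Finite) ∧
    G = PowerSeries.mk fun N =>
      ∑ᶠ i : ℕ, (-1 : ℚ) ^ i *
        PowerSeries.coeff N ((iterXi ξ i * iterXi ξ (i + 1)) ^ 2) := by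
  have hpow : ∀ N i : ℕ, N + 1 ≤ i → N < 2 ^ i := by
    intro N i hi
    calc N < 2 ^ N := Nat.lt_two_pow_self
      _ ≤ 2 ^ i := Nat.pow_le_pow_right (by norm_num) (by omega)
  refine ⟨order_iter h0 hroot, fun N => ?_, ?_⟩
  · refine Set.Finite.subset (Finset.finite_toSet (range (N + 1))) fun i hi => ?_
    simp only [Set.mem_setOf_eq] at hi
    simp only [Finset.coe_range, Set.mem_Iio]
    by_contra hc
    exact hi (coeff_Phi_zero h0 hroot (hpow N i (by omega)))
  · ext N
    rw [coeff_mk]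
    have hsupp : (Function.support fun i => (-1 : ℚ) ^ i *
        PowerSeries.coeff N ((iterXi ξ i * iterXi ξ (i + 1)) ^ 2)) ⊆ ↑(range (N + 1)) := by
      intro i hi
      simp only [Function.mem_support] at hi
      simp only [Finset.coe_range, Set.mem_Iio]
      by_contra hc
      rw [coeff_Phi_zero h0 hroot (hpow N i (by omega)), mul_zero] at hi
      exact hi rfl
    rw [finsum_eq_finset_sum_of_support_subset _ hsupp]
    have hG := congrArg (fun F => PowerSeries.coeff N F) (expand h0 hroot (N + 1))
    beta_reduce at hG
    rw [map_add, map_sum] at hG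
    have hterm : ∀ i ∈ range (N + 1),
        PowerSeries.coeff N ((-1 : PowerSeries ℚ) ^ i * (iterXi ξ i * iterXi ξ (i+1)) ^ 2)
        = (-1 : ℚ) ^ i * PowerSeries.coeff N ((iterXi ξ i * iterXi ξ (i+1)) ^ 2) := by
      intro i _
      rw [neg_one_pow_C, coeff_C_mul]
    rw [Finset.sum_congr rfl hterm] at hG
    rw [neg_one_pow_C, coeff_C_mul, tail_zero h0 hroot (hpow N (N+1) le_rfl), mul_zero,
      add_zero] at hG
    exact hG
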